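/- Let φ be any persuasive straightforward signaling scheme. Define a new scheme φ' by φ'(S|1) = φ(S|1) for all S ⊆ {1,…,N}, φ'(∅|0) = 1, and φ'(S|0) = 0 for all S ≠ ∅. Then φ' is also a persuasive straightforward signaling scheme, and the expected welfare of φ' is greater than or equal to the expected welfare of φ. -/
import Mathlib


open Finset

noncomputable section

/-- Welfare `W(θ, S) = θ·|S|·F(|S|) − Σ_{i∈S} r(i)`. -/
def W (F r : ℕ → ℝ) (θ : ℕ) (S : Finset ℕ) : ℝ :=
  (θ : ℝ) * S.card * F S.card - ∑ i ∈ S, r i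

/-- A straightforward signaling scheme: for each θ ∈ {0,1}, `φ θ` is a probability
distribution over the subsets of the agent set `{1,…,N}`. -/
def IsScheme (N : ℕ) (φ : ℕ → Finset ℕ → ℝ) : Prop :=
  (∀ θ ∈ ({0, 1} : Finset ℕ), ∀ S ∈ (Icc 1 N).powerset, 0 ≤ φ θ S) ∧
  (∀ θ ∈ ({0, 1} : Finset ℕ), ∑ S ∈ (Icc 1 N).powerset, φ θ S = 1)

/-- Expected welfare with prior μ(1) = μ1, μ(0) = 1 − μ1. -/
def EW (N : ℕ) (F r : ℕ → ℝ) (μ1 : ℝ) (φ : ℕ → Finset ℕ → ℝ) : ℝ :=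
  (1 - μ1) * ∑ S ∈ (Icc 1 N).powerset, φ 0 S * W F r 0 S +
  μ1 * ∑ S ∈ (Icc 1 N).powerset, φ 1 S * W F r 1 S

/-- Persuasiveness: the move constraint and the stay constraint for every agent. -/
def Persuasive (N : ℕ) (F r : ℕ → ℝ) (μ1 : ℝ) (φ : ℕ → Finset ℕ → ℝ) : Prop :=
  ∀ i ∈ Icc 1 N,
    (0 ≤ (1 - μ1) * ∑ S ∈ (Icc 1 N).powerset.filter (fun S => i ∈ S),
            φ 0 S * ((0 : ℝ) * F S.card - r i) +
          μ1 * ∑ S ∈ (Icc 1 N).powerset.filter (fun S => i ∈ S),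
            φ 1 S * ((1 : ℝ) * F S.card - r i)) ∧
    ((1 - μ1) * ∑ S ∈ (Icc 1 N).powerset.filter (fun S => i ∉ S),
        φ 0 S * ((0 : ℝ) * F (S.card + 1) - r i) +
      μ1 * ∑ S ∈ (Icc 1 N).powerset.filter (fun S => i ∉ S),
        φ 1 S * ((1 : ℝ) * F (S.card + 1) - r i) ≤ 0)

/-- replacing the θ = 0 component of a persuasive scheme by the point mass
on ∅ preserves persuasiveness and weakly increases expected welfare. -/
theorem stmt0 (N : ℕ) (hN : 1 ≤ N) (F r : ℕ → ℝ)
    (hFnn : ∀ n, n ≤ N → 0 ≤ F n) (hF01 : F 0 = F 1)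
    (hFmono : ∀ n, n + 1 ≤ N → F (n + 1) ≤ F n)
    (hr0 : r 0 = 0) (hrnn : ∀ i, i ≤ N → 0 ≤ r i)
    (hrmono : ∀ i, i + 1 ≤ N → r i ≤ r (i + 1))
    (μ1 : ℝ) (hμ0 : 0 < μ1) (hμ1 : μ1 < 1)
    (φ : ℕ → Finset ℕ → ℝ) (hsch : IsScheme N φ) (hper : Persuasive N F r μ1 φ)
    (φ' : ℕ → Finset ℕ → ℝ)
    (hφ'1 : ∀ S : Finset ℕ, φ' 1 S = φ 1 S)
    (hφ'0 : ∀ S : Finset ℕ, φ' 0 S = if S = ∅ then 1 else 0) :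
    IsScheme N φ' ∧ Persuasive N F r μ1 φ' ∧
      EW N F r μ1 φ ≤ EW N F r μ1 φ' := by
  obtain ⟨hnn, hsum⟩ := hsch
  have h0mem : (0 : ℕ) ∈ ({0, 1} : Finset ℕ) := by simp
  have h1mem : (1 : ℕ) ∈ ({0, 1} : Finset ℕ) := by simp
  have hemp : (∅ : Finset ℕ) ∈ (Icc 1 N).powerset := by simp
  refine ⟨⟨?_, ?_⟩, ?_, ?_⟩
  · intro θ hθ S hS
    rcases Finset.mem_insert.mp hθ with h | h
    · subst h; rw [hφ'0]; split <;> norm_num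
    · simp only [Finset.mem_singleton] at h; subst h
      rw [hφ'1]; exact hnn 1 h1mem S hS
  · intro θ hθ
    rcases Finset.mem_insert.mp hθ with h | h
    · subst h
      simp only [hφ'0]
      rw [Finset.sum_ite_eq' _ (∅ : Finset ℕ) (fun _ => (1 : ℝ))]
      simp [hemp]
    · simp only [Finset.mem_singleton] at h; subst h
      simp only [hφ'1]; exact hsum 1 h1mem
  · intro i hi
    obtain ⟨hi1, hiN⟩ := Finset.mem_Icc.mp hi
    have hri : 0 ≤ r i := hrnn i hiN
    obtain ⟨hmove, hstay⟩ := hper i hi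
    constructor
    · -- move constraint
      have hz : ∑ S ∈ (Icc 1 N).powerset.filter (fun S => i ∈ S),
          φ' 0 S * ((0 : ℝ) * F S.card - r i) = 0 := by
        apply Finset.sum_eq_zero
        intro S hS
        have hiS : i ∈ S := (Finset.mem_filter.mp hS).2
        have : S ≠ ∅ := Finset.ne_empty_of_mem hiS
        rw [hφ'0, if_neg this, zero_mul]
      have hA : (1 - μ1) * ∑ S ∈ (Icc 1 N).powerset.filter (fun S => i ∈ S),
          φ 0 S * ((0 : ℝ) * F S.card - r i) ≤ 0 := by
        apply mul_nonpos_of_nonneg_of_nonpos (by linarith)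
        apply Finset.sum_nonpos
        intro S hS
        have hS' := (Finset.mem_filter.mp hS).1
        have := hnn 0 h0mem S hS'
        nlinarith
      simp only [hz, hφ'1, mul_zero, zero_add]
      linarith
    · -- stay constraint
      have hz : ∑ S ∈ (Icc 1 N).powerset.filter (fun S => i ∉ S),
          φ' 0 S * ((0 : ℝ) * F (S.card + 1) - r i) = (0 : ℝ) * F (0 + 1) - r i := by
        have hemem : (∅ : Finset ℕ) ∈ (Icc 1 N).powerset.filter (fun S => i ∉ S) := by
          simp [hemp]
        rw [Finset.sum_eq_single (∅ : Finset ℕ)]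
        · rw [hφ'0, if_pos rfl, one_mul]; simp
        · intro S _ hSne; rw [hφ'0, if_neg hSne, zero_mul]
        · intro h; exact absurd hemem h
      have hm1 : ∑ S ∈ (Icc 1 N).powerset.filter (fun S => i ∉ S), φ 0 S ≤ 1 := by
        rw [← hsum 0 h0mem]
        apply Finset.sum_le_sum_of_subset_of_nonneg (Finset.filter_subset _ _)
        intro S hS _; exact hnn 0 h0mem S hS
      have hB : -(r i) ≤ ∑ S ∈ (Icc 1 N).powerset.filter (fun S => i ∉ S),
          φ 0 S * ((0 : ℝ) * F (S.card + 1) - r i) := by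
        have : ∑ S ∈ (Icc 1 N).powerset.filter (fun S => i ∉ S),
            φ 0 S * ((0 : ℝ) * F (S.card + 1) - r i)
            = (-(r i)) * ∑ S ∈ (Icc 1 N).powerset.filter (fun S => i ∉ S), φ 0 S := by
          rw [Finset.mul_sum]
          apply Finset.sum_congr rfl
          intro S _; ring
        rw [this]
        nlinarith
      simp only [hz, hφ'1]
      have : (0 : ℝ) * F (0 + 1) - r i = -(r i) := by ring
      rw [this]
      nlinarith [hB, hstay]
  · -- expected welfare
    unfold EW
    have hz : ∑ S ∈ (Icc 1 N).powerset, φ' 0 S * W F r 0 S = 0 := by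
      apply Finset.sum_eq_zero
      intro S _
      rw [hφ'0]
      split
      · next h => subst h; simp [W]
      · rw [zero_mul]
    have hle : ∑ S ∈ (Icc 1 N).powerset, φ 0 S * W F r 0 S ≤ 0 := by
      apply Finset.sum_nonpos
      intro S hS
      apply mul_nonpos_of_nonneg_of_nonpos (hnn 0 h0mem S hS)
      have : W F r 0 S = -(∑ j ∈ S, r j) := by simp [W]
      rw [this, neg_nonpos]
      apply Finset.sum_nonneg
      intro j hj
      have hjN : j ≤ N := (Finset.mem_Icc.mp
        (Finset.mem_powerset.mp hS hj)).2
      exact hrnn j hjN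
    have heq : ∑ S ∈ (Icc 1 N).powerset, φ' 1 S * W F r 1 S
        = ∑ S ∈ (Icc 1 N).powerset, φ 1 S * W F r 1 S := by
      apply Finset.sum_congr rfl
      intro S _; rw [hφ'1]
    rw [hz, heq]
    nlinarith [hle]

end
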